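/- If f : Ω → Ω is a monotone function and α is a countable limit ordinal, then for every β ∈ Ω the limit lim_{ξ→α} Iter_ξ f β exists and Iter_α f β = lim_{ξ→α} Iter_ξ f β (i.e., limsup_{ξ→α} Iter_ξ f β = liminf_{ξ→α} Iter_ξ f β = Iter_α f β). -/

import Mathlib

/-!  Framework: finite type structure over Ω = countable ordinals,
     limsup/liminf, transfinite iteration functionals, hereditarily
     positive and hereditarily monotone functionals. -/

noncomputable section
namespace IterOrd

open Ordinal

theorem omega1_pos : (0 : Ordinal) < ω₁ := Ordinal.omega0_pos.trans Ordinal.omega0_lt_omega_one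

/-- `Om` is Ω, the set of countable ordinals (ordinals `< ω₁`). -/
abbrev Om : Type 1 := {o : Ordinal // o < ω₁}

/-- Infimum of a subset of Ω (the minimum for nonempty sets; `0` for `∅`). -/
def infOm (s : Set Om) : Om :=
  ⟨sInf (Subtype.val '' s), by
    rcases (Subtype.val '' s).eq_empty_or_nonempty with h | h
    · rw [h]; simpa using omega1_pos
    · obtain ⟨x, _, he⟩ := csInf_mem h
      exact he ▸ x.2⟩

/-- Supremum of a subset of Ω.  Whenever the supremum of the set exists in Ω
(in particular for every countable subset, by regularity of `ω₁`) this is the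
genuine supremum; otherwise it takes a junk value. -/
def supOm (s : Set Om) : Om :=
  if h : sSup (Subtype.val '' s) < ω₁ then ⟨sSup (Subtype.val '' s), h⟩ else ⟨0, omega1_pos⟩

/-- Finite types over the base type `o` (interpreted as Ω). -/
inductive Ty : Type
  | base : Ty
  | arrow : Ty → Ty → Ty
deriving DecidableEq

/-- The full type structure over Ω: `El base = Ω` and
`El (arrow σ τ)` is the set of all functions `El σ → El τ`. -/
@[reducible] def El : Ty → Type 1
  | .base => Om
  | .arrow σ τ => El σ → El τ

/-- The order on each `El σ`: the ordinal order at base type, pointwise at arrow types. -/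
def Le : (σ : Ty) → El σ → El σ → Prop
  | .base => fun x y => x ≤ y
  | .arrow σ τ => fun f g => ∀ x : El σ, Le τ (f x) (g x)

/-- Suprema, computed pointwise at function types. -/
def supEl : (σ : Ty) → Set (El σ) → El σ
  | .base => supOm
  | .arrow σ τ => fun S (x : El σ) => supEl τ ((fun f : El (.arrow σ τ) => f x) '' S)

/-- Infima, computed pointwise at function types. -/
def infEl : (σ : Ty) → Set (El σ) → El σ
  | .base => infOm
  | .arrow σ τ => fun S (x : El σ) => infEl τ ((fun f : El (.arrow σ τ) => f x) '' S)

/-- `limsup_{ξ→ζ} f ξ = inf_{γ<ζ} sup_{γ≤ξ<ζ} f ξ`. -/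
def limsupEl (σ : Ty) (ζ : Ordinal) (f : ∀ ξ : Ordinal, ξ < ζ → El σ) : El σ :=
  infEl σ {y | ∃ γ, ∃ _ : γ < ζ, y = supEl σ {z | ∃ ξ, ∃ h : ξ < ζ, γ ≤ ξ ∧ z = f ξ h}}

/-- `liminf_{ξ→ζ} f ξ = sup_{γ<ζ} inf_{γ≤ξ<ζ} f ξ`. -/
def liminfEl (σ : Ty) (ζ : Ordinal) (f : ∀ ξ : Ordinal, ξ < ζ → El σ) : El σ :=
  supEl σ {y | ∃ γ, ∃ _ : γ < ζ, y = infEl σ {z | ∃ ξ, ∃ h : ξ < ζ, γ ≤ ξ ∧ z = f ξ h}}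

/-- `limsup` of a ζ-indexed sequence of ordinals. -/
def oLimsup (ζ : Ordinal) (a : Ordinal → Ordinal) : Ordinal :=
  sInf {s | ∃ γ, γ < ζ ∧ s = sSup (a '' {ξ | γ ≤ ξ ∧ ξ < ζ})}

/-- `liminf` of a ζ-indexed sequence of ordinals. -/
def oLiminf (ζ : Ordinal) (a : Ordinal → Ordinal) : Ordinal :=
  sSup {s | ∃ γ, γ < ζ ∧ s = sInf (a '' {ξ | γ ≤ ξ ∧ ξ < ζ})}

/-- The α-iteration functional of type σ:
`Iter 0 f x = x`, `Iter (α+1) f x = f (Iter α f x)`, and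
`Iter μ f x = limsup_{ξ→μ} Iter ξ f x` for limit μ. -/
def Iter (σ : Ty) (α : Ordinal) : (El σ → El σ) → El σ → El σ :=
  Ordinal.limitRecOn (motive := fun _ => (El σ → El σ) → El σ → El σ) α
    (fun _ x => x)
    (fun _ ih f x => f (ih f x))
    (fun μ _ ih f x => limsupEl σ μ (fun ξ h => ih ξ h f x))

/-- The pair (hereditarily positive, ≤hp), defined simultaneously by recursion on the type.
Every element of `Ω` and of `Ω_{ρ→τ}` with `ρ ≠ τ` is h.p., and `≤hp` there is `≤`;
`f : Ω_{τ→τ}` is h.p. iff it preserves h.p., is inflationary on h.p. arguments and is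
monotone (w.r.t. `≤hp`) on h.p. arguments; `f ≤hp f'` on `Ω_{τ→τ}` iff `f x ≤hp f' x`
for every h.p. `x`. -/
def HPaux : (σ : Ty) → (El σ → Prop) × (El σ → El σ → Prop)
  | .base => ⟨fun _ => True, fun x y => x ≤ y⟩
  | .arrow ρ τ =>
      ⟨fun f =>
        if h : ρ = τ then
          (∀ x, (HPaux ρ).1 x → (HPaux τ).1 (f x)) ∧
          (∀ x, (HPaux ρ).1 x → (HPaux τ).2 (cast (congrArg El h) x) (f x)) ∧
          (∀ x y, (HPaux ρ).1 x → (HPaux ρ).1 y → (HPaux ρ).2 x y → (HPaux τ).2 (f x) (f y))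
        else True,
       fun f g =>
        if ρ = τ then ∀ x, (HPaux ρ).1 x → (HPaux τ).2 (f x) (g x)
        else Le (.arrow ρ τ) f g⟩

/-- Hereditarily positive functionals. -/
def Hp (σ : Ty) : El σ → Prop := (HPaux σ).1

/-- The order `≤hp`. -/
def HpLe (σ : Ty) : El σ → El σ → Prop := (HPaux σ).2

/-- `f =hp g` iff `f ≤hp g` and `g ≤hp f`. -/
def HpEq (σ : Ty) (f g : El σ) : Prop := HpLe σ f g ∧ HpLe σ g f

/-- The pair (hereditarily monotone, ≤ on the hereditarily monotone structure),
by recursion on the type.  `f` is hereditarily monotone iff it maps hereditarily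
monotone arguments to hereditarily monotone values, monotonically; the order is
pointwise over hereditarily monotone arguments (i.e. the order of `Ω^mon`). -/
def HMaux : (σ : Ty) → (El σ → Prop) × (El σ → El σ → Prop)
  | .base => ⟨fun _ => True, fun x y => x ≤ y⟩
  | .arrow σ τ =>
      ⟨fun f =>
        (∀ x, (HMaux σ).1 x → (HMaux τ).1 (f x)) ∧
        (∀ x y, (HMaux σ).1 x → (HMaux σ).1 y → (HMaux σ).2 x y → (HMaux τ).2 (f x) (f y)),
       fun f g => ∀ x, (HMaux σ).1 x → (HMaux τ).2 (f x) (g x)⟩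

/-- Hereditarily monotone functionals: the members of the type structure `Ω^mon`. -/
def HM (σ : Ty) : El σ → Prop := (HMaux σ).1

/-- The (pointwise) order of the hereditarily monotone type structure `Ω^mon`. -/
def LeHM (σ : Ty) : El σ → El σ → Prop := (HMaux σ).2

/-- Equality in the hereditarily monotone type structure `Ω^mon`. -/
def EqHM (σ : Ty) (f g : El σ) : Prop := LeHM σ f g ∧ LeHM σ g f


open Cardinal in
private theorem sSup_lt_omega1 {S : Set Ordinal} (hS : S.Countable)
    (h : ∀ x ∈ S, x < ω₁) : sSup S < ω₁ := by
  rcases S.eq_empty_or_nonempty with rfl | hne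
  · simpa using omega1_pos
  · obtain ⟨g, hg⟩ := (Set.countable_iff_exists_surjective hne).1 hS
    have hb : sSup S ≤ ⨆ n, (g n : Ordinal) := by
      apply csSup_le hne
      intro x hx
      obtain ⟨n, hn⟩ := hg ⟨x, hx⟩
      calc x = (g n : Ordinal) := by rw [hn]
        _ ≤ _ := le_ciSup (Ordinal.bddAbove_range _) n
    refine hb.trans_lt ?_
    have := Ordinal.iSup_lt_omega_one (f := fun n => (g n : Ordinal))
      (fun n => h _ (g n).2)
    exact this

private theorem om_infOm_le {s : Set Om} {a : Om} (ha : a ∈ s) : infOm s ≤ a := by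
  show sInf (Subtype.val '' s) ≤ (a : Ordinal)
  exact csInf_le (OrderBot.bddBelow _) (Set.mem_image_of_mem _ ha)

private theorem om_le_infOm {s : Set Om} {a : Om} (hne : s.Nonempty)
    (h : ∀ b ∈ s, a ≤ b) : a ≤ infOm s := by
  show (a : Ordinal) ≤ sInf (Subtype.val '' s)
  apply le_csInf (hne.image _)
  rintro x ⟨b, hb, rfl⟩
  exact h b hb

private theorem om_supOm_le {s : Set Om} {a : Om} (h : ∀ b ∈ s, b ≤ a) : supOm s ≤ a := by
  rw [supOm]
  split
  · show sSup (Subtype.val '' s) ≤ (a : Ordinal)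
    apply csSup_le'
    rintro x ⟨b, hb, rfl⟩
    exact h b hb
  · show (0 : Ordinal) ≤ (a : Ordinal)
    exact zero_le

private theorem om_le_supOm {s : Set Om} {a : Om} (hs : s.Countable) (ha : a ∈ s) :
    a ≤ supOm s := by
  have hlt : sSup (Subtype.val '' s) < ω₁ :=
    sSup_lt_omega1 (hs.image _) (by rintro x ⟨b, hb, rfl⟩; exact b.2)
  rw [supOm, dif_pos hlt]
  show (a : Ordinal) ≤ sSup (Subtype.val '' s)
  have := (hs.image Subtype.val).to_subtype
  exact le_csSup Ordinal.bddAbove_of_small (Set.mem_image_of_mem _ ha)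

private theorem countable_Iio {ζ : Ordinal} (hζ : ζ < ω₁) : (Set.Iio ζ).Countable := by
  rw [Cardinal.countable_iff_lt_aleph_one, Ordinal.mk_Iio_ordinal]
  have h1 : ζ.card < Cardinal.aleph 1 :=
    Cardinal.lt_ord.1 (by rwa [Cardinal.ord_aleph])
  refine lt_of_lt_of_eq (Cardinal.lift_lt.2 h1) ?_
  rw [Cardinal.lift_aleph, Ordinal.lift_one]

/-- The tail segment `{X ξ : γ ≤ ξ < ζ}`. -/
private def sg (X : Ordinal → Om) (ζ γ : Ordinal) : Set Om :=
  {z | ∃ ξ, ∃ _ : ξ < ζ, γ ≤ ξ ∧ z = X ξ}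

private def bigSup (X : Ordinal → Om) (ζ : Ordinal) : Set Om :=
  {y | ∃ γ, ∃ _ : γ < ζ, y = supOm (sg X ζ γ)}

private def bigInf (X : Ordinal → Om) (ζ : Ordinal) : Set Om :=
  {y | ∃ γ, ∃ _ : γ < ζ, y = infOm (sg X ζ γ)}

private theorem limsupEl_base_eq (ζ : Ordinal) (X : Ordinal → Om) :
    limsupEl .base ζ (fun ξ _ => X ξ) = infOm (bigSup X ζ) := rfl

private theorem liminfEl_base_eq (ζ : Ordinal) (X : Ordinal → Om) :
    liminfEl .base ζ (fun ξ _ => X ξ) = supOm (bigInf X ζ) := rfl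

private theorem countable_sg {ζ : Ordinal} (hζ : ζ < ω₁) (X : Ordinal → Om) (γ : Ordinal) :
    (sg X ζ γ).Countable := by
  apply Set.Countable.mono _ ((countable_Iio hζ).image X)
  rintro z ⟨ξ, hξ, _, rfl⟩
  exact ⟨ξ, hξ, rfl⟩

private theorem countable_bigInf {ζ : Ordinal} (hζ : ζ < ω₁) (X : Ordinal → Om) :
    (bigInf X ζ).Countable := by
  apply Set.Countable.mono _ ((countable_Iio hζ).image (fun γ => infOm (sg X ζ γ)))
  rintro z ⟨γ, hγ, rfl⟩
  exact ⟨γ, hγ, rfl⟩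

private theorem Iter_zero (σ : Ty) (f : El σ → El σ) (x : El σ) : Iter σ 0 f x = x := by
  rw [Iter, Ordinal.limitRecOn_zero]

private theorem Iter_succ (σ : Ty) (ξ : Ordinal) (f : El σ → El σ) (x : El σ) :
    Iter σ (Order.succ ξ) f x = f (Iter σ ξ f x) := by
  rw [Iter, Ordinal.limitRecOn_succ]
  rfl

private theorem Iter_limit (σ : Ty) {μ : Ordinal} (hμ : Order.IsSuccLimit μ) (f : El σ → El σ)
    (x : El σ) : Iter σ μ f x = limsupEl σ μ (fun ξ _ => Iter σ ξ f x) := by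
  rw [Iter, Ordinal.limitRecOn_limit _ _ _ _ hμ]
  rfl

private theorem Iter_limit_base {μ : Ordinal} (hμ : Order.IsSuccLimit μ) (f : Om → Om) (x : Om) :
    Iter .base μ f x = infOm (bigSup (fun ξ => Iter .base ξ f x) μ) :=
  (Iter_limit .base hμ f x).trans (limsupEl_base_eq μ _)

private theorem iter_eq_of_eq (f : Om → Om) (β : Om) {ξ η : Ordinal} (h : ξ = η) :
    Iter .base ξ f β ≤ Iter .base η f β :=
  le_of_eq (congrArg (fun δ => Iter .base δ f β) h)

/-- General fact: `liminf ≤ limsup` at a countable limit ordinal. -/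
private theorem liminf_le_limsup {α : Ordinal} (hα : α < ω₁) (hlim : Order.IsSuccLimit α)
    (X : Ordinal → Om) : supOm (bigInf X α) ≤ infOm (bigSup X α) := by
  apply om_supOm_le
  rintro b ⟨γ, hγ, rfl⟩
  refine om_le_infOm ⟨supOm (sg X α 0), 0, hlim.pos, rfl⟩ ?_
  rintro c ⟨γ', hγ', rfl⟩
  have hm : max γ γ' < α := max_lt hγ hγ'
  calc infOm (sg X α γ) ≤ X (max γ γ') := om_infOm_le ⟨_, hm, le_max_left _ _, rfl⟩
    _ ≤ supOm (sg X α γ') := om_le_supOm (countable_sg hα X γ') ⟨_, hm, le_max_right _ _, rfl⟩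

/-- Inflationary case: the iterates are increasing. -/
private theorem iter_incr (f : Om → Om) (hf : Monotone f) (β : Om) (h1 : β ≤ f β) :
    ∀ η, η < ω₁ → (Iter .base η f β ≤ f (Iter .base η f β)) ∧
      ∀ ξ, ξ < η → Iter .base ξ f β ≤ Iter .base η f β := by
  intro η
  induction η using Ordinal.induction with
  | h η IH =>
  intro hη
  rcases Ordinal.zero_or_succ_or_isSuccLimit η with rfl | ⟨ζ, rfl⟩ | hl
  · refine ⟨?_, fun ξ h => absurd h (not_lt_of_ge zero_le)⟩
    rw [Iter_zero]; exact h1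
  · have hζ : ζ < ω₁ := (Order.lt_succ ζ).trans hη
    obtain ⟨ih1, ih2⟩ := IH ζ (Order.lt_succ ζ) hζ
    have hmono : ∀ ξ, ξ < Order.succ ζ → Iter .base ξ f β ≤ Iter .base (Order.succ ζ) f β := by
      intro ξ hξ
      rw [Iter_succ]
      rcases (Order.lt_succ_iff.mp hξ).eq_or_lt with he | hlt
      · exact (iter_eq_of_eq f β he).trans ih1
      · exact (ih2 ξ hlt).trans ih1
    refine ⟨?_, hmono⟩
    rw [Iter_succ]
    exact hf ih1
  · have heq := Iter_limit_base hl f β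
    have hmono : ∀ ξ, ξ < η → Iter .base ξ f β ≤ Iter .base η f β := by
      intro ξ hξ
      rw [heq]
      refine om_le_infOm ⟨supOm (sg (fun δ => Iter .base δ f β) η 0), 0, hl.pos, rfl⟩ ?_
      rintro b ⟨γ, hγ, rfl⟩
      have hm : max ξ γ < η := max_lt hξ hγ
      have hle : Iter .base ξ f β ≤ Iter .base (max ξ γ) f β := by
        rcases (le_max_left ξ γ).eq_or_lt with he | hlt
        · exact iter_eq_of_eq f β he
        · exact (IH _ hm (hm.trans hη)).2 ξ hlt
      exact hle.trans (om_le_supOm (countable_sg hη _ γ) ⟨_, hm, le_max_right _ _, rfl⟩)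
    refine ⟨?_, hmono⟩
    have key : infOm (bigSup (fun ξ => Iter .base ξ f β) η) ≤ f (Iter .base η f β) := by
      calc infOm (bigSup (fun ξ => Iter .base ξ f β) η)
          ≤ supOm (sg (fun ξ => Iter .base ξ f β) η 0) := om_infOm_le ⟨0, hl.pos, rfl⟩
        _ ≤ f (Iter .base η f β) := by
            apply om_supOm_le
            rintro z ⟨ξ, hξ, _, rfl⟩
            calc Iter .base ξ f β ≤ f (Iter .base ξ f β) := (IH ξ hξ (hξ.trans hη)).1
              _ ≤ f (Iter .base η f β) := hf (hmono ξ hξ)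
    exact heq.trans_le key

/-- Deflationary case: the iterates are decreasing. -/
private theorem iter_decr (f : Om → Om) (hf : Monotone f) (β : Om) (h1 : f β ≤ β) :
    ∀ η, η < ω₁ → (f (Iter .base η f β) ≤ Iter .base η f β) ∧
      ∀ ξ, ξ < η → Iter .base η f β ≤ Iter .base ξ f β := by
  intro η
  induction η using Ordinal.induction with
  | h η IH =>
  intro hη
  rcases Ordinal.zero_or_succ_or_isSuccLimit η with rfl | ⟨ζ, rfl⟩ | hl
  · refine ⟨?_, fun ξ h => absurd h (not_lt_of_ge zero_le)⟩
    rw [Iter_zero]; exact h1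
  · have hζ : ζ < ω₁ := (Order.lt_succ ζ).trans hη
    obtain ⟨ih1, ih2⟩ := IH ζ (Order.lt_succ ζ) hζ
    have hmono : ∀ ξ, ξ < Order.succ ζ → Iter .base (Order.succ ζ) f β ≤ Iter .base ξ f β := by
      intro ξ hξ
      rw [Iter_succ]
      rcases (Order.lt_succ_iff.mp hξ).eq_or_lt with he | hlt
      · exact ih1.trans (iter_eq_of_eq f β he.symm)
      · exact ih1.trans (ih2 ξ hlt)
    refine ⟨?_, hmono⟩
    rw [Iter_succ]
    exact hf ih1
  · have heq := Iter_limit_base hl f β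
    have hmono : ∀ ξ, ξ < η → Iter .base η f β ≤ Iter .base ξ f β := by
      intro ξ hξ
      rw [heq]
      calc infOm (bigSup (fun δ => Iter .base δ f β) η)
          ≤ supOm (sg (fun δ => Iter .base δ f β) η ξ) := om_infOm_le ⟨ξ, hξ, rfl⟩
        _ ≤ Iter .base ξ f β := by
            apply om_supOm_le
            rintro z ⟨ζ', hζ', hge, rfl⟩
            rcases hge.eq_or_lt with he | hlt
            · exact iter_eq_of_eq f β he.symm
            · exact (IH ζ' hζ' (hζ'.trans hη)).2 ξ hlt
    refine ⟨?_, hmono⟩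
    have key : f (Iter .base η f β) ≤ infOm (bigSup (fun ξ => Iter .base ξ f β) η) := by
      refine om_le_infOm ⟨supOm (sg (fun δ => Iter .base δ f β) η 0), 0, hl.pos, rfl⟩ ?_
      rintro b ⟨γ, hγ, rfl⟩
      have h2 : f (Iter .base η f β) ≤ Iter .base (Order.succ γ) f β := by
        rw [Iter_succ]; exact hf (hmono γ hγ)
      exact h2.trans (om_le_supOm (countable_sg hη _ γ)
        ⟨Order.succ γ, hl.succ_lt hγ, Order.le_succ γ, rfl⟩)
    exact key.trans_eq heq.symm

/-- If `f : Ω → Ω` is monotone and `α` is a countable limit ordinal,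
then for every `β ∈ Ω` the limit `lim_{ξ→α} Iter_ξ f β` exists and equals
`Iter_α f β` (i.e. both `limsup` and `liminf` of the iterates equal `Iter_α f β`). -/
theorem iter_limit_is_lim (f : Om → Om) (hf : Monotone f)
    (α : Ordinal) (hα : α < ω₁) (hlim : Order.IsSuccLimit α) (β : Om) :
    limsupEl .base α (fun ξ _ => Iter .base ξ f β) = Iter .base α f β ∧
    liminfEl .base α (fun ξ _ => Iter .base ξ f β) = Iter .base α f β := by
  have heq := Iter_limit_base hlim f β
  have hsup : limsupEl .base α (fun ξ _ => Iter .base ξ f β) = Iter .base α f β :=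
    (limsupEl_base_eq α fun ξ => Iter .base ξ f β).trans heq.symm
  refine ⟨hsup, ?_⟩
  rw [liminfEl_base_eq α fun ξ => Iter .base ξ f β, heq]
  refine le_antisymm (liminf_le_limsup hα hlim _) ?_
  rcases le_total β (f β) with h1 | h1
  · -- increasing case
    have M := iter_incr f hf β h1
    calc infOm (bigSup (fun ξ => Iter .base ξ f β) α)
        ≤ supOm (sg (fun ξ => Iter .base ξ f β) α 0) := om_infOm_le ⟨0, hlim.pos, rfl⟩
      _ ≤ supOm (bigInf (fun ξ => Iter .base ξ f β) α) := by
          apply om_supOm_le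
          rintro z ⟨ξ, hξ, _, rfl⟩
          have hz : Iter .base ξ f β ≤ infOm (sg (fun δ => Iter .base δ f β) α ξ) := by
            refine om_le_infOm ⟨Iter .base ξ f β, ξ, hξ, le_rfl, rfl⟩ ?_
            rintro w ⟨ζ, hζ, hge, rfl⟩
            rcases hge.eq_or_lt with he | hlt
            · exact iter_eq_of_eq f β he
            · exact (M ζ (hζ.trans hα)).2 ξ hlt
          exact hz.trans (om_le_supOm (countable_bigInf hα _) ⟨ξ, hξ, rfl⟩)
  · -- decreasing case
    have M := iter_decr f hf β h1
    calc infOm (bigSup (fun ξ => Iter .base ξ f β) α)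
        ≤ infOm (sg (fun ξ => Iter .base ξ f β) α 0) := by
          refine om_le_infOm ⟨Iter .base 0 f β, 0, hlim.pos, le_rfl, rfl⟩ ?_
          rintro w ⟨ξ, hξ, _, rfl⟩
          calc infOm (bigSup (fun δ => Iter .base δ f β) α)
              ≤ supOm (sg (fun δ => Iter .base δ f β) α ξ) := om_infOm_le ⟨ξ, hξ, rfl⟩
            _ ≤ Iter .base ξ f β := by
                apply om_supOm_le
                rintro z ⟨ζ, hζ, hge, rfl⟩
                rcases hge.eq_or_lt with he | hlt
                · exact iter_eq_of_eq f β he.symm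
                · exact (M ζ (hζ.trans hα)).2 ξ hlt
      _ ≤ supOm (bigInf (fun ξ => Iter .base ξ f β) α) :=
          om_le_supOm (countable_bigInf hα _) ⟨0, hlim.pos, rfl⟩

end IterOrd
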